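/- Let f : [0,∞) → [0,1] be càdlàg and non-increasing, σ_f = inf{t : f(t) = 0}, γ > 0, τ_f(t) = ∫_0^t f(r)^{-γ} dr for t < σ_f (and τ_f(t) = ∞ for t ≥ σ_f), τ_f^{-1}(t) = inf{u ≥ 0 : τ_f(u) > t}, and g(t) = f(τ_f^{-1}(t)). Then τ_f^{-1}(t) = ∫_0^t g(r)^γ dr for all t ≥ 0, and in particular σ_f = ∫_0^∞ g(r)^γ dr. -/

import Mathlib

open MeasureTheory
open scoped ENNReal

theorem stmt9 (f : ℝ → ℝ) (γ : ℝ) (hγ : 0 < γ)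
    (hf01 : ∀ t, f t ∈ Set.Icc (0:ℝ) 1)
    (hmono : AntitoneOn f (Set.Ici 0))
    (hrc : ∀ t ∈ Set.Ici (0:ℝ), ContinuousWithinAt f (Set.Ici t) t)
    (σ : ℝ≥0∞) (hσ : σ = sInf (ENNReal.ofReal '' {t : ℝ | 0 ≤ t ∧ f t = 0}))
    (τ : ℝ → ℝ≥0∞)
    (hτ : ∀ t : ℝ, τ t = if ENNReal.ofReal t < σ
        then ENNReal.ofReal (∫ r in (0:ℝ)..t, (f r) ^ (-γ)) else ⊤)
    (τinv : ℝ → ℝ)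
    (hτinv : ∀ t : ℝ, τinv t = sInf {u : ℝ | 0 ≤ u ∧ ENNReal.ofReal t < τ u})
    (g : ℝ → ℝ) (hg : ∀ t, g t = f (τinv t)) :
    (∀ t : ℝ, 0 ≤ t → τinv t = ∫ r in (0:ℝ)..t, (g r) ^ γ)
    ∧ σ = ∫⁻ r in Set.Ioi (0:ℝ), ENNReal.ofReal ((g r) ^ γ) := by
  classical
  have hfnn : ∀ t, 0 ≤ f t := fun t => (hf01 t).1
  have hfle : ∀ t, f t ≤ 1 := fun t => (hf01 t).2
  set T : ℝ → ℝ := fun v => ∫ r in (0:ℝ)..v, f r ^ (-γ) with hTdef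
  have hfpos_of_le : ∀ {a b : ℝ}, 0 ≤ a → a ≤ b → 0 < f b → 0 < f a :=
    fun {a b} ha hab hb => lt_of_lt_of_le hb (hmono ha (ha.trans hab) hab)
  have hmemIcc : ∀ {a b : ℝ}, 0 ≤ a → a ≤ b → 0 < f b →
      MonotoneOn (fun r => f r ^ (-γ)) (Set.Icc a b) := by
    intro a b ha hab hb x hx y hy hxy
    have hy0 : 0 < f y := hfpos_of_le (ha.trans hy.1) hy.2 hb
    have hle : f y ≤ f x := hmono (ha.trans hx.1) (ha.trans hy.1) hxy
    exact Real.rpow_le_rpow_of_nonpos hy0 hle (neg_nonpos.mpr hγ.le)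
  have hInt : ∀ {a b : ℝ}, 0 ≤ a → a ≤ b → 0 < f b →
      IntervalIntegrable (fun r => f r ^ (-γ)) volume a b := by
    intro a b ha hab hb
    have h := hmemIcc ha hab hb
    rw [← Set.uIcc_of_le hab] at h
    exact h.intervalIntegrable
  have hTsub : ∀ {a b : ℝ}, 0 ≤ a → a ≤ b → 0 < f b →
      T b - T a = ∫ r in a..b, f r ^ (-γ) := by
    intro a b ha hab hb
    exact intervalIntegral.integral_interval_sub_left
      (hInt le_rfl (ha.trans hab) hb) (hInt le_rfl ha (hfpos_of_le ha hab hb))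
  have hone_le : ∀ {x : ℝ}, 0 < f x → 1 ≤ f x ^ (-γ) := fun {x} hx =>
    Real.one_le_rpow_of_pos_of_le_one_of_nonpos hx (hfle x) (neg_nonpos.mpr hγ.le)
  have hT_lb : ∀ {a b : ℝ}, 0 ≤ a → a ≤ b → 0 < f b → b - a ≤ T b - T a := by
    intro a b ha hab hb
    rw [hTsub ha hab hb]
    calc b - a = ∫ _ in a..b, (1:ℝ) := by simp
    _ ≤ ∫ r in a..b, f r ^ (-γ) := by
        apply intervalIntegral.integral_mono_on hab intervalIntegrable_const (hInt ha hab hb)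
        intro x hx
        exact hone_le (hfpos_of_le (ha.trans hx.1) hx.2 hb)
  have hT_ub : ∀ {a b : ℝ}, 0 ≤ a → a ≤ b → 0 < f b → T b - T a ≤ (b - a) * f b ^ (-γ) := by
    intro a b ha hab hb
    rw [hTsub ha hab hb]
    calc (∫ r in a..b, f r ^ (-γ)) ≤ ∫ _ in a..b, f b ^ (-γ) := by
          apply intervalIntegral.integral_mono_on hab (hInt ha hab hb) intervalIntegrable_const
          intro x hx
          exact Real.rpow_le_rpow_of_nonpos hb
            (hmono (ha.trans hx.1) (ha.trans hab) hx.2) (neg_nonpos.mpr hγ.le)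
      _ = (b - a) * f b ^ (-γ) := by simp [smul_eq_mul]
  have hT0 : T 0 = 0 := intervalIntegral.integral_same
  have hT_mono : ∀ {a b : ℝ}, 0 ≤ a → a ≤ b → 0 < f b → T a ≤ T b := by
    intro a b ha hab hb
    have := hT_lb ha hab hb; linarith
  have hT_ge : ∀ {b : ℝ}, 0 ≤ b → 0 < f b → b ≤ T b := by
    intro b hb0 hb
    have := hT_lb le_rfl hb0 hb
    rw [hT0] at this; linarith
  have hT_nonneg : ∀ {b : ℝ}, 0 ≤ b → 0 < f b → 0 ≤ T b :=
    fun {b} hb0 hb => hb0.trans (hT_ge hb0 hb)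
  have hposnext : ∀ v, 0 ≤ v → 0 < f v → ∀ ε, 0 < ε → ∃ δ, 0 < δ ∧ δ ≤ ε ∧ 0 < f (v + δ) := by
    intro v hv hfv ε hε
    have hev : ∀ᶠ x in nhdsWithin v (Set.Ici v), 0 < f x :=
      (hrc v (Set.mem_Ici.mpr hv)).eventually (eventually_gt_nhds hfv)
    have hmem : {x | 0 < f x} ∈ nhdsWithin v (Set.Ici v) := hev
    rw [Metric.mem_nhdsWithin_iff] at hmem
    obtain ⟨r, hr0, hsub⟩ := hmem
    have h1 : 0 < min ε (r/2) := lt_min hε (by linarith)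
    refine ⟨min ε (r/2), h1, min_le_left _ _, ?_⟩
    apply hsub
    constructor
    · rw [Metric.mem_ball, Real.dist_eq, show v + min ε (r/2) - v = min ε (r/2) by ring,
        abs_of_pos h1]
      have := min_le_right ε (r/2); linarith
    · exact Set.mem_Ici.mpr (le_add_of_nonneg_right h1.le)
  have hpos : ∀ v, 0 ≤ v → (ENNReal.ofReal v < σ ↔ 0 < f v) := by
    intro v hv
    constructor
    · intro h
      rcases eq_or_lt_of_le (hfnn v) with h0 | h0
      · exfalso
        have hle : σ ≤ ENNReal.ofReal v := by
          rw [hσ]; exact sInf_le ⟨v, ⟨hv, h0.symm⟩, rfl⟩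
        exact absurd (lt_of_lt_of_le h hle) (lt_irrefl _)
      · exact h0
    · intro h
      obtain ⟨δ, hδ0, _, hδpos⟩ := hposnext v hv h 1 one_pos
      have hle : ENNReal.ofReal (v + δ) ≤ σ := by
        rw [hσ]
        apply le_sInf
        rintro x ⟨u, ⟨hu0, hufz⟩, rfl⟩
        apply ENNReal.ofReal_le_ofReal
        by_contra hc
        push_neg at hc
        have h2 : 0 < f u := hfpos_of_le hu0 hc.le hδpos
        rw [hufz] at h2; exact lt_irrefl 0 h2
      calc ENNReal.ofReal v < ENNReal.ofReal (v + δ) := by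
            rw [ENNReal.ofReal_lt_ofReal_iff_of_nonneg hv]; linarith
        _ ≤ σ := hle
  have hfz_top : σ ≠ ⊤ → 0 ≤ σ.toReal ∧ f σ.toReal = 0 := by
    intro hne
    refine ⟨ENNReal.toReal_nonneg, ?_⟩
    have hofs : ENNReal.ofReal σ.toReal = σ := ENNReal.ofReal_toReal hne
    have hzero : ∀ t, σ.toReal < t → f t = 0 := by
      intro t hst
      have h1 : σ < ENNReal.ofReal t := by
        rw [← hofs, ENNReal.ofReal_lt_ofReal_iff_of_nonneg ENNReal.toReal_nonneg]; exact hst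
      rw [hσ] at h1
      obtain ⟨x, hx, hxlt⟩ := sInf_lt_iff.mp h1
      obtain ⟨u, ⟨hu0, hufz⟩, rfl⟩ := hx
      have hut : u ≤ t := by
        by_contra hc; push_neg at hc
        exact absurd hxlt (not_lt.mpr (ENNReal.ofReal_le_ofReal hc.le))
      have h2 := hmono (Set.mem_Ici.mpr hu0) (Set.mem_Ici.mpr (hu0.trans hut)) hut
      rw [hufz] at h2
      exact le_antisymm h2 (hfnn t)
    have h2 : Filter.Tendsto f (nhdsWithin σ.toReal (Set.Ioi σ.toReal)) (nhds (f σ.toReal)) :=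
      (hrc σ.toReal (Set.mem_Ici.mpr ENNReal.toReal_nonneg)).mono_left
        (nhdsWithin_mono _ Set.Ioi_subset_Ici_self)
    have h3 : Filter.Tendsto f (nhdsWithin σ.toReal (Set.Ioi σ.toReal)) (nhds 0) := by
      apply Filter.Tendsto.congr' _ tendsto_const_nhds
      filter_upwards [self_mem_nhdsWithin] with x hx
      exact (hzero x hx).symm
    exact tendsto_nhds_unique h2 h3
  have hτ_pos : ∀ u, 0 ≤ u → 0 < f u → τ u = ENNReal.ofReal (T u) := by
    intro u hu hfu
    rw [hτ u, if_pos ((hpos u hu).mpr hfu)]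
  have hτ_top : ∀ u, 0 ≤ u → f u = 0 → τ u = ⊤ := by
    intro u hu hfu
    rw [hτ u, if_neg]
    intro hc
    have := (hpos u hu).mp hc
    rw [hfu] at this; exact lt_irrefl 0 this
  have hSet : ∀ t : ℝ, {u : ℝ | 0 ≤ u ∧ ENNReal.ofReal t < τ u}.Nonempty := by
    intro t
    by_cases hσtop : σ = ⊤
    · have hu0 : (0:ℝ) ≤ max t 0 + 1 := by positivity
      have hfu : 0 < f (max t 0 + 1) := by
        apply (hpos _ hu0).mp
        rw [hσtop]; exact ENNReal.ofReal_lt_top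
      refine ⟨max t 0 + 1, hu0, ?_⟩
      rw [hτ_pos _ hu0 hfu]
      have h1 : max t 0 + 1 ≤ T (max t 0 + 1) := hT_ge hu0 hfu
      have h2 : t < T (max t 0 + 1) := by
        have := le_max_left t 0; linarith
      rw [ENNReal.ofReal_lt_ofReal_iff (by linarith [le_max_right t 0])]
      exact h2
    · obtain ⟨hs0, hfs⟩ := hfz_top hσtop
      refine ⟨σ.toReal, hs0, ?_⟩
      rw [hτ_top _ hs0 hfs]
      exact ENNReal.ofReal_lt_top
  have hbdd : ∀ t : ℝ, BddBelow {u : ℝ | 0 ≤ u ∧ ENNReal.ofReal t < τ u} :=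
    fun t => ⟨0, fun u hu => hu.1⟩
  have hτinv_nonneg : ∀ t, 0 ≤ τinv t := by
    intro t; rw [hτinv t]
    exact le_csInf (hSet t) (fun u hu => hu.1)
  have hτinv_le : ∀ t u, 0 ≤ u → ENNReal.ofReal t < τ u → τinv t ≤ u := by
    intro t u hu h
    rw [hτinv t]; exact csInf_le (hbdd t) ⟨hu, h⟩
  have hτinv_ge : ∀ t v, 0 ≤ v → 0 < f v → T v ≤ t → v ≤ τinv t := by
    intro t v hv hfv hTvt
    rw [hτinv t]
    apply le_csInf (hSet t)
    rintro u ⟨hu0, hut⟩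
    by_cases hfu : 0 < f u
    · have htu : ENNReal.ofReal t < ENNReal.ofReal (T u) := by
        rwa [hτ_pos u hu0 hfu] at hut
      have h0t : 0 ≤ t := (hT_nonneg hv hfv).trans hTvt
      have htu' : t < T u := (ENNReal.ofReal_lt_ofReal_iff_of_nonneg h0t).mp htu
      by_contra hc; push_neg at hc
      have := hT_mono hu0 hc.le hfv
      linarith
    · have hfu0 : f u = 0 := le_antisymm (not_lt.mp hfu) (hfnn u)
      have h1 : σ ≤ ENNReal.ofReal u := not_lt.mp (fun hc => hfu ((hpos u hu0).mp hc))
      have h2 : ENNReal.ofReal v < ENNReal.ofReal u := lt_of_lt_of_le ((hpos v hv).mpr hfv) h1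
      exact ((ENNReal.ofReal_lt_ofReal_iff_of_nonneg hv).mp h2).le
  have hτinv_mono : Monotone τinv := by
    intro a b hab
    rw [hτinv a, hτinv b]
    apply csInf_le_csInf (hbdd a) (hSet b)
    rintro u ⟨hu0, hub⟩
    exact ⟨hu0, lt_of_le_of_lt (ENNReal.ofReal_le_ofReal hab) hub⟩
  have hleft : ∀ v, 0 ≤ v → 0 < f v → τinv (T v) = v := by
    intro v hv hfv
    refine le_antisymm ?_ (hτinv_ge _ v hv hfv le_rfl)
    by_contra hc; push_neg at hc
    obtain ⟨δ, hδ0, hδle, hδpos⟩ := hposnext v hv hfv ((τinv (T v) - v)/2) (by linarith)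
    have h1 : τinv (T v) ≤ v + δ := by
      apply hτinv_le _ _ (by linarith)
      rw [hτ_pos _ (by linarith) hδpos]
      have h2 : T v < T (v + δ) := by
        have := hT_lb hv (by linarith : v ≤ v + δ) hδpos; linarith
      rw [ENNReal.ofReal_lt_ofReal_iff_of_nonneg (hT_nonneg hv hfv)]
      exact h2
    linarith
  have hτinveq : ∀ t, 0 ≤ t → 0 < f (τinv t) → T (τinv t) = t := by
    intro t ht hfv
    have hv0 : 0 ≤ τinv t := hτinv_nonneg t
    have hCpos : 0 < f (τinv t) ^ (-γ) := Real.rpow_pos_of_pos hfv _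
    refine le_antisymm ?_ ?_
    · by_contra hcon; push_neg at hcon
      have hvpos : 0 < τinv t := by
        rcases eq_or_lt_of_le hv0 with h | h
        · exfalso; rw [← h, hT0] at hcon; linarith
        · exact h
      have hδ0 : 0 < min (τinv t / 2) ((T (τinv t) - t) / (2 * f (τinv t) ^ (-γ))) := by
        apply lt_min (by linarith)
        apply div_pos (by linarith) (by positivity)
      set δ := min (τinv t / 2) ((T (τinv t) - t) / (2 * f (τinv t) ^ (-γ))) with hδdef
      have hδv : δ ≤ τinv t / 2 := min_le_left _ _
      have hv'0 : 0 ≤ τinv t - δ := by linarith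
      have hv'v : τinv t - δ < τinv t := by linarith
      have hfv' : 0 < f (τinv t - δ) := hfpos_of_le hv'0 hv'v.le hfv
      have hTv' : t < T (τinv t - δ) := by
        have hub := hT_ub hv'0 hv'v.le hfv
        have hd : δ * f (τinv t) ^ (-γ) ≤ (T (τinv t) - t) / 2 := by
          have h5 : δ ≤ (T (τinv t) - t) / (2 * f (τinv t) ^ (-γ)) := min_le_right _ _
          have h7 : δ * f (τinv t) ^ (-γ)
              ≤ (T (τinv t) - t) / (2 * f (τinv t) ^ (-γ)) * f (τinv t) ^ (-γ) :=
            mul_le_mul_of_nonneg_right h5 hCpos.le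
          have h8 : (T (τinv t) - t) / (2 * f (τinv t) ^ (-γ)) * f (τinv t) ^ (-γ)
              = (T (τinv t) - t) / 2 := by
            field_simp
          linarith
        rw [show τinv t - (τinv t - δ) = δ by ring] at hub
        linarith
      have h6 := hτinv_le t (τinv t - δ) hv'0 (by
        rw [hτ_pos _ hv'0 hfv']
        exact (ENNReal.ofReal_lt_ofReal_iff_of_nonneg ht).mpr hTv')
      linarith
    · by_contra hcon; push_neg at hcon
      have hev : ∀ᶠ x in nhdsWithin (τinv t) (Set.Ici (τinv t)), f (τinv t) / 2 < f x :=
        (hrc (τinv t) (Set.mem_Ici.mpr hv0)).eventually (eventually_gt_nhds (by linarith))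
      have hmem : {x | f (τinv t) / 2 < f x} ∈ nhdsWithin (τinv t) (Set.Ici (τinv t)) := hev
      rw [Metric.mem_nhdsWithin_iff] at hmem
      obtain ⟨r, hr0, hsub⟩ := hmem
      have hC'0 : 0 < (f (τinv t) / 2) ^ (-γ) := Real.rpow_pos_of_pos (by linarith) _
      have hε0 : 0 < min (r/2) ((t - T (τinv t)) / (2 * (f (τinv t) / 2) ^ (-γ))) := by
        apply lt_min (by linarith)
        apply div_pos (by linarith) (by positivity)
      set ε := min (r/2) ((t - T (τinv t)) / (2 * (f (τinv t) / 2) ^ (-γ))) with hεdef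
      have hfw : f (τinv t) / 2 < f (τinv t + ε) := by
        apply hsub
        constructor
        · rw [Metric.mem_ball, Real.dist_eq,
            show τinv t + ε - τinv t = ε by ring, abs_of_pos hε0]
          have := min_le_left (r/2) ((t - T (τinv t)) / (2 * (f (τinv t) / 2) ^ (-γ)))
          linarith
        · exact Set.mem_Ici.mpr (le_add_of_nonneg_right hε0.le)
      have hfw0 : 0 < f (τinv t + ε) := lt_trans (by linarith) hfw
      have hTw : T (τinv t + ε) ≤ t := by
        have hub := hT_ub hv0 (by linarith : τinv t ≤ τinv t + ε) hfw0
        have h1 : f (τinv t + ε) ^ (-γ) ≤ (f (τinv t) / 2) ^ (-γ) :=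
          Real.rpow_le_rpow_of_nonpos (by linarith) hfw.le (neg_nonpos.mpr hγ.le)
        have h2 : ε ≤ (t - T (τinv t)) / (2 * (f (τinv t) / 2) ^ (-γ)) := min_le_right _ _
        have h3 : ε * (f (τinv t) / 2) ^ (-γ) ≤ (t - T (τinv t)) / 2 := by
          have h7 : ε * (f (τinv t) / 2) ^ (-γ)
              ≤ (t - T (τinv t)) / (2 * (f (τinv t) / 2) ^ (-γ)) * (f (τinv t) / 2) ^ (-γ) :=
            mul_le_mul_of_nonneg_right h2 hC'0.le
          have h8 : (t - T (τinv t)) / (2 * (f (τinv t) / 2) ^ (-γ)) * (f (τinv t) / 2) ^ (-γ)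
              = (t - T (τinv t)) / 2 := by
            field_simp
          linarith
        rw [show τinv t + ε - τinv t = ε by ring] at hub
        nlinarith [mul_le_mul_of_nonneg_left h1 hε0.le]
      have := hτinv_ge t (τinv t + ε) (by linarith) hfw0 hTw
      linarith
  -- properties of g
  have hg_anti : Antitone g := by
    intro a b hab
    rw [hg a, hg b]
    exact hmono (Set.mem_Ici.mpr (hτinv_nonneg a)) (Set.mem_Ici.mpr (hτinv_nonneg b))
      (hτinv_mono hab)
  have hgnn : ∀ r, 0 ≤ g r := fun r => by rw [hg r]; exact hfnn _
  have hgle : ∀ r, g r ≤ 1 := fun r => by rw [hg r]; exact hfle _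
  have hgγ_anti : Antitone (fun r => g r ^ γ) := fun a b hab =>
    Real.rpow_le_rpow (hgnn b) (hg_anti hab) hγ.le
  have hgInt : ∀ a b : ℝ, IntervalIntegrable (fun r => g r ^ γ) volume a b :=
    fun a b => hgγ_anti.intervalIntegrable
  have hgγnn : ∀ r, 0 ≤ g r ^ γ := fun r => Real.rpow_nonneg (hgnn r) γ
  have hgγle : ∀ r, g r ^ γ ≤ 1 := fun r => Real.rpow_le_one (hgnn r) (hgle r) hγ.le
  -- the central lemma
  have hA : ∀ v, 0 ≤ v → 0 < f v → (∫ r in (0:ℝ)..(T v), g r ^ γ) = v := by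
    intro v hv0 hfv
    set A : ℝ → ℝ := fun x => ∫ r in (0:ℝ)..(T x), g r ^ γ with hAdef
    have key : ∀ x ∈ Set.Icc (0:ℝ) v, ∀ y ∈ Set.Icc (0:ℝ) v, x ≤ y →
        0 ≤ A y - A x ∧ A y - A x ≤ (y - x) * f v ^ (-γ) := by
      intro x hx y hy hxy
      have hfy : 0 < f y := hfpos_of_le hy.1 hy.2 hfv
      have hTxy : T x ≤ T y := hT_mono hx.1 hxy hfy
      have hsub : A y - A x = ∫ r in (T x)..(T y), g r ^ γ :=
        intervalIntegral.integral_interval_sub_left (hgInt 0 (T y)) (hgInt 0 (T x))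
      constructor
      · rw [hsub]
        exact intervalIntegral.integral_nonneg hTxy (fun u _ => hgγnn u)
      · rw [hsub]
        have h1 : (∫ r in (T x)..(T y), g r ^ γ) ≤ ∫ _ in (T x)..(T y), (1:ℝ) :=
          intervalIntegral.integral_mono_on hTxy (hgInt _ _) intervalIntegrable_const
            (fun u _ => hgγle u)
        have h2 : (∫ _ in (T x)..(T y), (1:ℝ)) = T y - T x := by simp
        have h3 : T y - T x ≤ (y - x) * f y ^ (-γ) := hT_ub hx.1 hxy hfy
        have h4 : f y ^ (-γ) ≤ f v ^ (-γ) :=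
          Real.rpow_le_rpow_of_nonpos hfv
            (hmono (Set.mem_Ici.mpr hy.1) (Set.mem_Ici.mpr hv0) hy.2) (neg_nonpos.mpr hγ.le)
        have h5 : 0 ≤ y - x := by linarith
        nlinarith
    have hCnn : 0 ≤ f v ^ (-γ) := (Real.rpow_pos_of_pos hfv _).le
    have hcontA : ContinuousOn A (Set.Icc 0 v) := by
      apply LipschitzOnWith.continuousOn (K := Real.toNNReal (f v ^ (-γ)))
      apply LipschitzOnWith.of_dist_le_mul
      intro x hx y hy
      rw [Real.dist_eq, Real.dist_eq, Real.coe_toNNReal _ hCnn]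
      rcases le_total x y with h | h
      · obtain ⟨h1, h2⟩ := key x hx y hy h
        rw [abs_sub_comm, abs_of_nonneg h1, abs_sub_comm, abs_of_nonneg (by linarith : 0 ≤ y - x)]
        linarith
      · obtain ⟨h1, h2⟩ := key y hy x hx h
        rw [abs_of_nonneg h1, abs_of_nonneg (by linarith : 0 ≤ x - y)]
        linarith
    have hderiv : ∀ x ∈ Set.Ico (0:ℝ) v, HasDerivWithinAt (fun y => A y - y) 0 (Set.Ici x) x := by
      intro x hx
      have hfx : 0 < f x := hfpos_of_le hx.1 hx.2.le hfv
      have hmeas1 : StronglyMeasurableAtFilter (fun r => f r ^ (-γ))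
          (nhdsWithin x (Set.Ioi x)) volume := by
        obtain ⟨δ, hδ0, _, hδpos⟩ := hposnext x hx.1 hfx 1 one_pos
        refine ⟨Set.Ioc x (x + δ), Ioc_mem_nhdsGT_of_mem ⟨le_rfl, by linarith⟩, ?_⟩
        have h := hInt (a := x) (b := x + δ) hx.1 (by linarith) hδpos
        exact ((intervalIntegrable_iff_integrableOn_Ioc_of_le (by linarith)).mp h).aestronglyMeasurable
      have hcont1 : ContinuousWithinAt (fun r => f r ^ (-γ)) (Set.Ioi x) x :=
        (Real.continuousAt_rpow_const (f x) (-γ) (Or.inl hfx.ne')).comp_continuousWithinAt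
          ((hrc x (Set.mem_Ici.mpr hx.1)).mono Set.Ioi_subset_Ici_self)
      have hinner : HasDerivWithinAt T (f x ^ (-γ)) (Set.Ici x) x :=
        intervalIntegral.integral_hasDerivWithinAt_right (hInt le_rfl hx.1 hfx) hmeas1 hcont1
      have hτTx : τinv (T x) = x := hleft x hx.1 hfx
      have hgTx : g (T x) = f x := by rw [hg, hτTx]
      have hTxnn : 0 ≤ T x := hT_nonneg hx.1 hfx
      have hcontg : ContinuousWithinAt g (Set.Ioi (T x)) (T x) := by
        apply Metric.tendsto_nhdsWithin_nhds.mpr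
        intro ε' hε'
        obtain ⟨δ₁, hδ₁0, hδ₁⟩ := Metric.tendsto_nhdsWithin_nhds.mp
          (hrc x (Set.mem_Ici.mpr hx.1)) ε' hε'
        obtain ⟨δ₂, hδ₂0, hδ₂le, hδ₂pos⟩ := hposnext x hx.1 hfx (δ₁/2) (by linarith)
        refine ⟨T (x + δ₂) - T x, by have := hT_lb hx.1 (by linarith : x ≤ x + δ₂) hδ₂pos; linarith, ?_⟩
        intro y hy hdy
        rw [Real.dist_eq] at hdy
        have hyTx : T x < y := hy
        have hylt : y < T (x + δ₂) := by
          rw [abs_of_pos (by linarith)] at hdy; linarith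
        have h1 : x ≤ τinv y := by
          have := hτinv_mono hyTx.le
          rwa [hτTx] at this
        have h2 : τinv y ≤ x + δ₂ := by
          apply hτinv_le y (x + δ₂) (by linarith [hx.1])
          rw [hτ_pos _ (by linarith [hx.1]) hδ₂pos]
          exact (ENNReal.ofReal_lt_ofReal_iff_of_nonneg (by linarith [hx.1])).mpr hylt
        have h3 : f (x + δ₂) ≤ f (τinv y) :=
          hmono (Set.mem_Ici.mpr (hτinv_nonneg y)) (Set.mem_Ici.mpr (by linarith [hx.1])) h2
        have h4 : f (τinv y) ≤ f x :=
          hmono (Set.mem_Ici.mpr hx.1) (Set.mem_Ici.mpr (hτinv_nonneg y)) h1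
        have h5 : dist (f (x + δ₂)) (f x) < ε' := by
          apply hδ₁ (Set.mem_Ici.mpr (by linarith : x ≤ x + δ₂))
          rw [Real.dist_eq, show x + δ₂ - x = δ₂ by ring, abs_of_pos hδ₂0]
          linarith
        rw [Real.dist_eq] at h5 ⊢
        rw [hg y, hgTx]
        have h6 : |f (x + δ₂) - f x| = f x - f (x + δ₂) := by
          rw [abs_sub_comm, abs_of_nonneg]
          exact sub_nonneg.mpr (hmono (Set.mem_Ici.mpr hx.1) (Set.mem_Ici.mpr (by linarith [hx.1]))
            (by linarith))
        rw [h6] at h5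
        rw [abs_sub_comm, abs_of_nonneg (by linarith : 0 ≤ f x - f (τinv y))]
        linarith
      have hcontgγ : ContinuousWithinAt (fun r => g r ^ γ) (Set.Ioi (T x)) (T x) :=
        (Real.continuousAt_rpow_const (g (T x)) γ (Or.inr hγ.le)).comp_continuousWithinAt hcontg
      have hmeas2 : StronglyMeasurableAtFilter (fun r => g r ^ γ)
          (nhdsWithin (T x) (Set.Ioi (T x))) volume :=
        ⟨Set.univ, Filter.univ_mem, (hgγ_anti.measurable.aestronglyMeasurable)⟩
      have houter : HasDerivWithinAt (fun y => ∫ r in (0:ℝ)..y, g r ^ γ) (g (T x) ^ γ)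
          (Set.Ici (T x)) (T x) :=
        intervalIntegral.integral_hasDerivWithinAt_right (hgInt 0 (T x)) hmeas2 hcontgγ
      have hmaps : Set.MapsTo T (Set.Icc x v) (Set.Ici (T x)) := by
        intro z hz
        exact Set.mem_Ici.mpr (hT_mono hx.1 hz.1 (hfpos_of_le (hx.1.trans hz.1) hz.2 hfv))
      have hcomp : HasDerivWithinAt A (f x ^ (-γ) • (g (T x) ^ γ)) (Set.Icc x v) x :=
        houter.scomp x (hinner.mono (Set.Icc_subset_Ici_self)) hmaps
      have hIccmem : Set.Icc x v ∈ nhdsWithin x (Set.Ici x) :=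
        Icc_mem_nhdsGE_of_mem ⟨le_rfl, hx.2⟩
      have hcomp' : HasDerivWithinAt A (f x ^ (-γ) • (g (T x) ^ γ)) (Set.Ici x) x :=
        hcomp.mono_of_mem_nhdsWithin hIccmem
      have hval : f x ^ (-γ) • (g (T x) ^ γ) = 1 := by
        rw [hgTx, smul_eq_mul, ← Real.rpow_add hfx]
        norm_num
      rw [hval] at hcomp'
      have := hcomp'.sub (hasDerivWithinAt_id x (Set.Ici x))
      rw [sub_self] at this; exact this
    have hcont' : ContinuousOn (fun y => A y - y) (Set.Icc 0 v) :=
      hcontA.sub continuousOn_id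
    have hmvt := norm_image_sub_le_of_norm_deriv_right_le_segment (f' := fun _ => (0:ℝ))
      (C := 0) hcont' hderiv (fun x hx => by simp) v (Set.right_mem_Icc.mpr hv0)
    have hA0 : A 0 = 0 := by
      simp only [hAdef, hT0, intervalIntegral.integral_same]
    rw [hA0] at hmvt
    simp only [sub_zero, zero_mul] at hmvt
    have h11 : ‖A v - v‖ = 0 := le_antisymm hmvt (norm_nonneg _)
    have h12 := sub_eq_zero.mp (norm_eq_zero.mp h11)
    exact h12
  -- Part 1
  have hpart1 : ∀ t : ℝ, 0 ≤ t → τinv t = ∫ r in (0:ℝ)..t, g r ^ γ := by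
    intro t ht
    by_cases hfv : 0 < f (τinv t)
    · have h1 := hτinveq t ht hfv
      have h2 := (hA (τinv t) (hτinv_nonneg t) hfv)
      rw [h1] at h2
      exact h2.symm
    · have hfv0 : f (τinv t) = 0 := le_antisymm (not_lt.mp hfv) (hfnn _)
      have hσne : σ ≠ ⊤ := by
        intro hc
        exact hfv ((hpos _ (hτinv_nonneg t)).mp (by rw [hc]; exact ENNReal.ofReal_lt_top))
      obtain ⟨hs0, hfs⟩ := hfz_top hσne
      have hofs : ENNReal.ofReal σ.toReal = σ := ENNReal.ofReal_toReal hσne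
      have hvs : τinv t = σ.toReal := by
        refine le_antisymm ?_ ?_
        · exact hτinv_le t σ.toReal hs0 (by rw [hτ_top _ hs0 hfs]; exact ENNReal.ofReal_lt_top)
        · have h1 : σ ≤ ENNReal.ofReal (τinv t) :=
            not_lt.mp (fun hc => hfv ((hpos _ (hτinv_nonneg t)).mp hc))
          rw [← hofs] at h1
          exact (ENNReal.ofReal_le_ofReal_iff (hτinv_nonneg t)).mp h1
      rw [hvs]
      have hkey : ∀ v', 0 ≤ v' → v' < σ.toReal → v' ≤ ∫ r in (0:ℝ)..t, g r ^ γ := by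
        intro v' h0 hlt
        have hfv' : 0 < f v' := by
          apply (hpos v' h0).mp
          rw [← hofs]
          exact (ENNReal.ofReal_lt_ofReal_iff_of_nonneg h0).mpr hlt
        have hTt : T v' ≤ t := by
          by_contra hcc; push_neg at hcc
          have h1 : τinv t ≤ τinv (T v') := hτinv_mono hcc.le
          rw [hleft v' h0 hfv', hvs] at h1
          linarith
        have h2 := hA v' h0 hfv'
        have h4 : (∫ r in (0:ℝ)..t, g r ^ γ) - ∫ r in (0:ℝ)..(T v'), g r ^ γ
            = ∫ r in (T v')..t, g r ^ γ :=
          intervalIntegral.integral_interval_sub_left (hgInt 0 t) (hgInt 0 (T v'))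
        have h5 : 0 ≤ ∫ r in (T v')..t, g r ^ γ :=
          intervalIntegral.integral_nonneg hTt (fun u _ => hgγnn u)
        linarith
      have hge : σ.toReal ≤ ∫ r in (0:ℝ)..t, g r ^ γ := by
        by_contra hcc; push_neg at hcc
        have hI0 : 0 ≤ ∫ r in (0:ℝ)..t, g r ^ γ :=
          intervalIntegral.integral_nonneg ht (fun u _ => hgγnn u)
        have h1 := hkey (((∫ r in (0:ℝ)..t, g r ^ γ) + σ.toReal)/2) (by linarith) (by linarith)
        linarith
      have hle : (∫ r in (0:ℝ)..t, g r ^ γ) ≤ σ.toReal := by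
        have htZ : t ∈ {r : ℝ | 0 ≤ r ∧ r ≤ t ∧ g r = 0} := ⟨ht, le_rfl, by rw [hg]; exact hfv0⟩
        have hZne : {r : ℝ | 0 ≤ r ∧ r ≤ t ∧ g r = 0}.Nonempty := ⟨t, htZ⟩
        have hZbdd : BddBelow {r : ℝ | 0 ≤ r ∧ r ≤ t ∧ g r = 0} := ⟨0, fun r hr => hr.1⟩
        set r₀ := sInf {r : ℝ | 0 ≤ r ∧ r ≤ t ∧ g r = 0} with hr₀def
        have hr₀0 : 0 ≤ r₀ := le_csInf hZne (fun r hr => hr.1)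
        have hr₀t : r₀ ≤ t := csInf_le hZbdd htZ
        have hzero : ∀ r, r₀ < r → g r = 0 := by
          intro r hr
          obtain ⟨r', hr'Z, hr'lt⟩ := (csInf_lt_iff hZbdd hZne).mp hr
          exact le_antisymm (hr'Z.2.2 ▸ hg_anti hr'lt.le) (hgnn r)
        have hsplit : (∫ r in (0:ℝ)..t, g r ^ γ)
            = (∫ r in (0:ℝ)..r₀, g r ^ γ) + ∫ r in r₀..t, g r ^ γ :=
          (intervalIntegral.integral_add_adjacent_intervals (hgInt 0 r₀) (hgInt r₀ t)).symm
        have hz2 : (∫ r in r₀..t, g r ^ γ) = 0 := by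
          rw [intervalIntegral.integral_of_le hr₀t]
          rw [show (fun r => g r ^ γ) = (fun r => g r ^ γ) from rfl]
          rw [MeasureTheory.setIntegral_congr_fun (g := fun _ => (0:ℝ)) measurableSet_Ioc ?_]
          · simp
          · intro r hr
            show g r ^ γ = (0:ℝ)
            rw [hzero r hr.1, Real.zero_rpow hγ.ne']
        have hz1 : (∫ r in (0:ℝ)..r₀, g r ^ γ) ≤ σ.toReal := by
          by_contra hcc; push_neg at hcc
          rcases eq_or_lt_of_le hr₀0 with h0 | h0
          · rw [← h0] at hcc
            simp at hcc
            linarith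
          · set ε := (∫ r in (0:ℝ)..r₀, g r ^ γ) - σ.toReal with hεdef
            have hε0 : 0 < ε := by linarith
            have hrlt : max (r₀ - ε/2) 0 < r₀ := max_lt (by linarith) h0
            have hr0' : 0 ≤ max (r₀ - ε/2) 0 := le_max_right _ _
            have hrt : max (r₀ - ε/2) 0 ≤ t := hrlt.le.trans hr₀t
            have hrnZ : max (r₀ - ε/2) 0 ∉ {r : ℝ | 0 ≤ r ∧ r ≤ t ∧ g r = 0} :=
              notMem_of_lt_csInf hrlt hZbdd
            have hgr : 0 < f (τinv (max (r₀ - ε/2) 0)) := by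
              have hne : g (max (r₀ - ε/2) 0) ≠ 0 := fun hgr0 => hrnZ ⟨hr0', hrt, hgr0⟩
              rw [hg] at hne
              exact lt_of_le_of_ne (hfnn _) (Ne.symm hne)
            have hTr := hτinveq (max (r₀ - ε/2) 0) hr0' hgr
            have h2 := hA (τinv (max (r₀ - ε/2) 0)) (hτinv_nonneg _) hgr
            rw [hTr] at h2
            have h3 : τinv (max (r₀ - ε/2) 0) ≤ σ.toReal := by
              rw [← hvs]; exact hτinv_mono hrt
            have h4 : (∫ x in (0:ℝ)..r₀, g x ^ γ) - ∫ x in (0:ℝ)..(max (r₀ - ε/2) 0), g x ^ γ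
                = ∫ x in (max (r₀ - ε/2) 0)..r₀, g x ^ γ :=
              intervalIntegral.integral_interval_sub_left (hgInt 0 r₀) (hgInt 0 _)
            have h5 : (∫ x in (max (r₀ - ε/2) 0)..r₀, g x ^ γ) ≤ r₀ - max (r₀ - ε/2) 0 := by
              calc (∫ x in (max (r₀ - ε/2) 0)..r₀, g x ^ γ)
                  ≤ ∫ _ in (max (r₀ - ε/2) 0)..r₀, (1:ℝ) :=
                    intervalIntegral.integral_mono_on hrlt.le (hgInt _ _)
                      intervalIntegrable_const (fun u _ => hgγle u)
                _ = r₀ - max (r₀ - ε/2) 0 := by simp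
            have h6 : r₀ - max (r₀ - ε/2) 0 ≤ ε/2 := by
              have := le_max_left (r₀ - ε/2) (0:ℝ); linarith
            linarith
        linarith
      linarith
  refine ⟨hpart1, ?_⟩
  -- Part 2
  have hmeasg : Measurable fun r => ENNReal.ofReal (g r ^ γ) :=
    (hgγ_anti.measurable).ennreal_ofReal
  have hstepB : ∀ n : ℕ, (∫⁻ r in Set.Ioc (0:ℝ) (n:ℝ), ENNReal.ofReal (g r ^ γ))
      = ENNReal.ofReal (τinv n) := by
    intro n
    have hn0 : (0:ℝ) ≤ (n:ℝ) := Nat.cast_nonneg n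
    have hint : IntegrableOn (fun r => g r ^ γ) (Set.Ioc (0:ℝ) (n:ℝ)) volume :=
      (intervalIntegrable_iff_integrableOn_Ioc_of_le hn0).mp (hgInt 0 n)
    rw [← MeasureTheory.ofReal_integral_eq_lintegral_ofReal hint
      (Filter.Eventually.of_forall (fun r => hgγnn r))]
    congr 1
    rw [← intervalIntegral.integral_of_le hn0]
    exact (hpart1 n hn0).symm
  have hstepA : (∫⁻ r in Set.Ioi (0:ℝ), ENNReal.ofReal (g r ^ γ))
      = ⨆ n : ℕ, ∫⁻ r in Set.Ioc (0:ℝ) (n:ℝ), ENNReal.ofReal (g r ^ γ) := by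
    rw [← lintegral_indicator measurableSet_Ioi]
    have hpt : ∀ r : ℝ, (Set.Ioi (0:ℝ)).indicator (fun r => ENNReal.ofReal (g r ^ γ)) r
        = ⨆ n : ℕ, (Set.Ioc (0:ℝ) (n:ℝ)).indicator (fun r => ENNReal.ofReal (g r ^ γ)) r := by
      intro r
      by_cases hr : 0 < r
      · rw [Set.indicator_of_mem (Set.mem_Ioi.mpr hr)]
        refine le_antisymm ?_ ?_
        · refine le_iSup_of_le ⌈r⌉₊ ?_
          rw [Set.indicator_of_mem (Set.mem_Ioc.mpr ⟨hr, Nat.le_ceil r⟩)]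
        · apply iSup_le
          intro n
          by_cases hn : r ∈ Set.Ioc (0:ℝ) (n:ℝ)
          · rw [Set.indicator_of_mem hn]
          · rw [Set.indicator_of_notMem hn]; exact zero_le
      · rw [Set.indicator_of_notMem (by simpa using hr)]
        symm
        apply le_antisymm _ zero_le
        apply iSup_le
        intro n
        rw [Set.indicator_of_notMem (fun hn => hr hn.1)]
    calc (∫⁻ r, (Set.Ioi (0:ℝ)).indicator (fun r => ENNReal.ofReal (g r ^ γ)) r)
        = ∫⁻ r, ⨆ n : ℕ, (Set.Ioc (0:ℝ) (n:ℝ)).indicator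
            (fun r => ENNReal.ofReal (g r ^ γ)) r := by
          congr 1; funext r; exact hpt r
      _ = ⨆ n : ℕ, ∫⁻ r, (Set.Ioc (0:ℝ) (n:ℝ)).indicator
            (fun r => ENNReal.ofReal (g r ^ γ)) r := by
          apply lintegral_iSup
          · intro n
            exact hmeasg.indicator measurableSet_Ioc
          · intro m n hmn
            intro r
            apply Set.indicator_le_indicator_of_subset
            · exact Set.Ioc_subset_Ioc le_rfl (Nat.cast_le.mpr hmn)
            · intro a; exact zero_le
      _ = ⨆ n : ℕ, ∫⁻ r in Set.Ioc (0:ℝ) (n:ℝ), ENNReal.ofReal (g r ^ γ) := by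
          congr 1; funext n
          exact lintegral_indicator measurableSet_Ioc _
  rw [hstepA]
  simp only [hstepB]
  apply le_antisymm
  · apply ENNReal.le_of_forall_nnreal_lt
    intro p hp
    have hp0 : (0:ℝ) ≤ (p:ℝ) := p.coe_nonneg
    have hofp : (p : ℝ≥0∞) = ENNReal.ofReal (p:ℝ) := ENNReal.ofReal_coe_nnreal.symm
    have hfp : 0 < f (p:ℝ) := (hpos (p:ℝ) hp0).mp (by rw [← hofp]; exact hp)
    have h1 : ((p:ℝ)) ≤ τinv ((⌈T (p:ℝ)⌉₊ : ℕ) : ℝ) := by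
      have h2 := hτinv_mono (Nat.le_ceil (T (p:ℝ)))
      rwa [hleft (p:ℝ) hp0 hfp] at h2
    calc (p:ℝ≥0∞) = ENNReal.ofReal p := hofp
      _ ≤ ENNReal.ofReal (τinv (⌈T (p:ℝ)⌉₊ : ℝ)) := ENNReal.ofReal_le_ofReal h1
      _ ≤ ⨆ n : ℕ, ENNReal.ofReal (τinv (n:ℝ)) := le_iSup (fun n : ℕ => ENNReal.ofReal (τinv (n:ℝ))) _
  · apply iSup_le
    intro n
    by_cases hσtop : σ = ⊤
    · rw [hσtop]; exact le_top
    · obtain ⟨hs0, hfs⟩ := hfz_top hσtop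
      have h1 : τinv n ≤ σ.toReal :=
        hτinv_le n _ hs0 (by rw [hτ_top _ hs0 hfs]; exact ENNReal.ofReal_lt_top)
      calc ENNReal.ofReal (τinv n) ≤ ENNReal.ofReal σ.toReal := ENNReal.ofReal_le_ofReal h1
        _ = σ := ENNReal.ofReal_toReal hσtop
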